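/- No element of the cone 𝒞 of rank at least 4 generates an extreme ray: if A ∈ 𝒞 has rank ≥ 4, then there exist B, C ∈ 𝒞 with A = B + C such that B is not a nonnegative scalar multiple of A. -/

import Mathlib

open Matrix

/-- The vector `v(x,y,z) = (x², xy, xz, y², yz, z²)ᵀ ∈ ℝ⁶`. -/
def v (x y z : ℝ) : Fin 6 → ℝ := ![x ^ 2, x * y, x * z, y ^ 2, y * z, z ^ 2]

/-- Membership in the cone 𝒞 of 6×6 real positive semidefinite matrices
satisfying `a₁₄ = a₂₂`, `a₁₅ = a₂₃`, `a₁₆ = a₃₃`, `a₂₅ = a₃₄`, `a₂₆ = a₃₅`,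
`a₄₆ = a₅₅` (1-based indexing). -/
def memC (A : Matrix (Fin 6) (Fin 6) ℝ) : Prop :=
  A.PosSemidef ∧ A 0 3 = A 1 1 ∧ A 0 4 = A 1 2 ∧ A 0 5 = A 2 2 ∧
    A 1 4 = A 2 3 ∧ A 1 5 = A 2 4 ∧ A 3 5 = A 4 4

namespace NotExtremeAux

/-- Index table parametrizing symmetric 4×4 matrices by 10 coordinates. -/
def midx : Fin 4 → Fin 4 → Fin 10 :=
  ![![0,1,2,3], ![1,4,5,6], ![2,5,7,8], ![3,6,8,9]]

/-- Symmetric 4×4 matrix from 10 coordinates. -/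
def sym4 (c : Fin 10 → ℝ) : Matrix (Fin 4) (Fin 4) ℝ :=
  Matrix.of fun i j => c (midx i j)

lemma sym4_transpose (c : Fin 10 → ℝ) : (sym4 c)ᵀ = sym4 c := by
  ext i j
  fin_cases i <;> fin_cases j <;> rfl

lemma sym4_add (a b : Fin 10 → ℝ) : sym4 (a + b) = sym4 a + sym4 b := by
  ext i j; simp [sym4]

lemma sym4_smul (r : ℝ) (a : Fin 10 → ℝ) : sym4 (r • a) = r • sym4 a := by
  ext i j; simp [sym4]

lemma sym4_eq_zero {c : Fin 10 → ℝ} (h : sym4 c = 0) : c = 0 := by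
  have h' : ∀ i j, c (midx i j) = 0 := by
    intro i j
    have := congrFun (congrFun h i) j
    simpa [sym4] using this
  funext k
  fin_cases k
  · exact h' 0 0
  · exact h' 0 1
  · exact h' 0 2
  · exact h' 0 3
  · exact h' 1 1
  · exact h' 1 2
  · exact h' 1 3
  · exact h' 2 2
  · exact h' 2 3
  · exact h' 3 3

/-- The conjugation map `c ↦ W (sym4 c) Wᵀ` as a linear map. -/
def psi (W : Matrix (Fin 6) (Fin 4) ℝ) :
    (Fin 10 → ℝ) →ₗ[ℝ] Matrix (Fin 6) (Fin 6) ℝ where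
  toFun c := W * sym4 c * Wᵀ
  map_add' a b := by
    show W * sym4 (a + b) * Wᵀ = W * sym4 a * Wᵀ + W * sym4 b * Wᵀ
    rw [sym4_add, Matrix.mul_add, Matrix.add_mul]
  map_smul' r a := by
    show W * sym4 (r • a) * Wᵀ = r • (W * sym4 a * Wᵀ)
    rw [sym4_smul, Matrix.mul_smul, Matrix.smul_mul]

lemma psi_apply (W : Matrix (Fin 6) (Fin 4) ℝ) (c : Fin 10 → ℝ) :
    psi W c = W * sym4 c * Wᵀ := rfl

def rowL : Fin 6 → Fin 6 := ![0,0,0,1,1,3]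
def colL : Fin 6 → Fin 6 := ![3,4,5,4,5,5]
def rowR : Fin 6 → Fin 6 := ![1,1,2,2,2,4]
def colR : Fin 6 → Fin 6 := ![1,2,2,3,4,4]

/-- The six linear constraints as a linear map. -/
def constr : Matrix (Fin 6) (Fin 6) ℝ →ₗ[ℝ] (Fin 6 → ℝ) where
  toFun M := fun i => M (rowL i) (colL i) - M (rowR i) (colR i)
  map_add' M N := by
    funext i; simp [Matrix.add_apply]; ring
  map_smul' r M := by
    funext i; simp [Matrix.smul_apply]; ring

lemma gram_inj {W : Matrix (Fin 6) (Fin 4) ℝ} (hW : ∀ x, W *ᵥ x = 0 → x = 0) :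
    ∀ x, (Wᵀ * W) *ᵥ x = 0 → x = 0 := by
  intro x hx
  apply hW
  rw [← dotProduct_self_eq_zero (v := W *ᵥ x)]
  calc (W *ᵥ x) ⬝ᵥ (W *ᵥ x) = (x ᵥ* Wᵀ) ⬝ᵥ (W *ᵥ x) := by rw [vecMul_transpose]
    _ = x ⬝ᵥ (Wᵀ *ᵥ (W *ᵥ x)) := (dotProduct_mulVec x Wᵀ (W *ᵥ x)).symm
    _ = x ⬝ᵥ ((Wᵀ * W) *ᵥ x) := by rw [mulVec_mulVec]
    _ = 0 := by rw [hx, dotProduct_zero]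

lemma mul_eq_zero_of_inj {G : Matrix (Fin 4) (Fin 4) ℝ}
    (hG : ∀ x, G *ᵥ x = 0 → x = 0) {M : Matrix (Fin 4) (Fin 4) ℝ}
    (h : G * M = 0) : M = 0 := by
  ext i j
  have hcol : G *ᵥ (fun k => M k j) = 0 := by
    funext i'
    have := congrFun (congrFun h i') j
    simpa [Matrix.mul_apply, Matrix.mulVec, dotProduct] using this
  have := congrFun (hG _ hcol) i
  simpa using this

lemma conj_inj {W : Matrix (Fin 6) (Fin 4) ℝ} (hW : ∀ x, W *ᵥ x = 0 → x = 0)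
    {M : Matrix (Fin 4) (Fin 4) ℝ} (h : W * M * Wᵀ = 0) : M = 0 := by
  have hG := gram_inj hW
  have h1 : (Wᵀ * W) * (M * (Wᵀ * W)) = 0 := by
    have e : (Wᵀ * W) * (M * (Wᵀ * W)) = Wᵀ * (W * M * Wᵀ) * W := by
      simp only [Matrix.mul_assoc]
    rw [e, h, Matrix.mul_zero, Matrix.zero_mul]
  have h2 : M * (Wᵀ * W) = 0 := mul_eq_zero_of_inj hG h1
  have h3 : (Wᵀ * W) * Mᵀ = 0 := by
    have := congrArg Matrix.transpose h2
    simpa [Matrix.transpose_mul, Matrix.mul_assoc] using this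
  have h4 : Mᵀ = 0 := mul_eq_zero_of_inj hG h3
  calc M = Mᵀᵀ := (Matrix.transpose_transpose M).symm
    _ = 0 := by rw [h4]; simp

lemma quad_bound (S : Matrix (Fin 6) (Fin 6) ℝ) (x : Fin 6 → ℝ) :
    |x ⬝ᵥ (S *ᵥ x)| ≤ (∑ i, ∑ j, |S i j|) * (x ⬝ᵥ x) := by
  have hT : ∀ i, x i * x i ≤ x ⬝ᵥ x := by
    intro i
    exact Finset.single_le_sum (fun k _ => mul_self_nonneg (x k)) (Finset.mem_univ i)
  have hterm : ∀ i j, |x i * (S i j * x j)| ≤ |S i j| * (x ⬝ᵥ x) := by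
    intro i j
    have h1 : |x i * (S i j * x j)| = |S i j| * |x i * x j| := by
      rw [show x i * (S i j * x j) = S i j * (x i * x j) by ring, abs_mul]
    rw [h1]
    apply mul_le_mul_of_nonneg_left _ (abs_nonneg _)
    have h2 : |x i * x j| ≤ (x i * x i + x j * x j) / 2 := by
      rw [abs_mul]
      nlinarith [sq_nonneg (|x i| - |x j|), sq_abs (x i), sq_abs (x j),
        abs_nonneg (x i), abs_nonneg (x j)]
    have hi := hT i
    have hj := hT j
    linarith
  calc |x ⬝ᵥ (S *ᵥ x)| = |∑ i, x i * (∑ j, S i j * x j)| := rfl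
    _ ≤ ∑ i, |x i * (∑ j, S i j * x j)| := Finset.abs_sum_le_sum_abs _ _
    _ ≤ ∑ i, ∑ j, |x i * (S i j * x j)| := by
        apply Finset.sum_le_sum
        intro i _
        rw [Finset.mul_sum]
        exact Finset.abs_sum_le_sum_abs _ _
    _ ≤ ∑ i, ∑ j, |S i j| * (x ⬝ᵥ x) := by
        apply Finset.sum_le_sum; intro i _
        apply Finset.sum_le_sum; intro j _
        exact hterm i j
    _ = (∑ i, ∑ j, |S i j|) * (x ⬝ᵥ x) := by
        rw [Finset.sum_mul]
        refine Finset.sum_congr rfl fun i _ => ?_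
        rw [Finset.sum_mul]

lemma eps_mul_le (F : ℝ) (hF : 0 ≤ F) : (1 / (2 * (1 + F))) * F ≤ 1/2 := by
  rw [div_mul_eq_mul_div, one_mul, div_le_iff₀ (by positivity : (0:ℝ) < 2 * (1 + F))]
  nlinarith

lemma posSemidef_half_add (S : Matrix (Fin 6) (Fin 6) ℝ) (hS : Sᵀ = S) (η : ℝ)
    (hη : |η| * (∑ i, ∑ j, |S i j|) ≤ 1/2) :
    ((1/2 : ℝ) • (1 : Matrix (Fin 6) (Fin 6) ℝ) + η • S).PosSemidef := by
  refine Matrix.PosSemidef.of_dotProduct_mulVec_nonneg ?_ ?_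
  · have hSH : Sᴴ = S := by
      ext i j
      rw [conjTranspose_apply, star_trivial]
      exact congrFun (congrFun hS i) j
    show _ᴴ = _
    simp [conjTranspose_add, conjTranspose_smul, conjTranspose_one, hSH, hS]
  · intro y
    have key := quad_bound S y
    have hT : 0 ≤ y ⬝ᵥ y := Finset.sum_nonneg fun i _ => mul_self_nonneg _
    have hη' : |η| * |y ⬝ᵥ (S *ᵥ y)| ≤ (1/2) * (y ⬝ᵥ y) := by
      calc |η| * |y ⬝ᵥ (S *ᵥ y)| ≤ |η| * ((∑ i, ∑ j, |S i j|) * (y ⬝ᵥ y)) :=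
            mul_le_mul_of_nonneg_left key (abs_nonneg _)
        _ = (|η| * (∑ i, ∑ j, |S i j|)) * (y ⬝ᵥ y) := by ring
        _ ≤ (1/2) * (y ⬝ᵥ y) := mul_le_mul_of_nonneg_right hη hT
    have hmain : -(1/2 * (y ⬝ᵥ y)) ≤ η * (y ⬝ᵥ (S *ᵥ y)) := by
      have h1 := neg_abs_le (η * (y ⬝ᵥ (S *ᵥ y)))
      rw [abs_mul] at h1
      linarith
    have hexpand : star y ⬝ᵥ (((1/2 : ℝ) • (1 : Matrix (Fin 6) (Fin 6) ℝ) + η • S) *ᵥ y)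
        = (1/2) * (y ⬝ᵥ y) + η * (y ⬝ᵥ (S *ᵥ y)) := by
      simp [add_mulVec, smul_mulVec, dotProduct_add, dotProduct_smul,
        one_mulVec, smul_eq_mul]
    rw [hexpand]
    linarith

end NotExtremeAux

open scoped MatrixOrder

open NotExtremeAux in
/-- No element of the cone 𝒞 of rank at least 4 generates an extreme ray. -/
theorem rank_ge_four_not_extreme (A : Matrix (Fin 6) (Fin 6) ℝ) (hA : memC A)
    (hrank : 4 ≤ A.rank) :
    ∃ B C : Matrix (Fin 6) (Fin 6) ℝ, memC B ∧ memC C ∧ A = B + C ∧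
      ¬∃ s : ℝ, 0 ≤ s ∧ B = s • A := by
  obtain ⟨hPSD, h14, h15, h16, h25, h26, h46⟩ := hA
  set R := CFC.sqrt A with hRdef
  have hRR : R * R = A := CFC.sqrt_mul_sqrt_self A hPSD.nonneg
  have hRH : Rᴴ = R := (CFC.sqrt_nonneg A).posSemidef.1
  have hRsym : Rᵀ = R := by
    ext i j
    have := congrFun (congrFun hRH i) j
    rw [conjTranspose_apply, star_trivial] at this
    exact this
  have hrankR : 4 ≤ R.rank := by
    have h := Matrix.rank_mul_le_left R R
    rw [hRR] at h
    omega
  -- extract four linearly independent columns from the range of R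
  obtain ⟨f, hf⟩ := exists_linearIndependent_of_le_finrank
    (R := ℝ) (M := ↥(LinearMap.range R.mulVecLin)) hrankR
  have hw : LinearIndependent ℝ (fun i => ((f i : Fin 6 → ℝ))) :=
    hf.map' (Submodule.subtype _) (Submodule.ker_subtype _)
  have hex : ∀ i, ∃ x, R *ᵥ x = (f i : Fin 6 → ℝ) := by
    intro i
    obtain ⟨x, hx⟩ := LinearMap.mem_range.mp (f i).2
    exact ⟨x, by rw [← hx]; rfl⟩
  choose u hu using hex
  set Y : Matrix (Fin 6) (Fin 4) ℝ := Matrix.of fun i j => u j i with hYdef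
  set W : Matrix (Fin 6) (Fin 4) ℝ := R * Y with hWdef
  have hWcol : ∀ j i, W i j = (f j : Fin 6 → ℝ) i := by
    intro j i
    have e : W i j = (R *ᵥ u j) i := by
      simp [hWdef, hYdef, Matrix.mul_apply, Matrix.mulVec, dotProduct]
    rw [e, hu j]
  have hWinj : ∀ x, W *ᵥ x = 0 → x = 0 := by
    intro x hx
    have hsum : ∑ j, x j • ((f j : Fin 6 → ℝ)) = 0 := by
      funext i
      have h0 := congrFun hx i
      have h1 : (W *ᵥ x) i = ∑ j, x j * (f j : Fin 6 → ℝ) i := by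
        simp [Matrix.mulVec, dotProduct, hWcol, mul_comm]
      rw [h1] at h0
      simpa [Finset.sum_apply] using h0
    have hz := Fintype.linearIndependent_iff.mp hw x hsum
    funext j
    exact hz j
  set Ψ := psi W with hΨdef
  set Φ := constr.comp Ψ with hΦdef
  have hΨinj : Function.Injective Ψ := by
    intro a b hab
    have h0 : Ψ (a - b) = 0 := by rw [map_sub, hab, sub_self]
    have h1 : W * sym4 (a - b) * Wᵀ = 0 := h0
    have h2 := conj_inj hWinj h1
    have h3 := sym4_eq_zero h2
    exact sub_eq_zero.mp h3
  have hAne : A ≠ 0 := by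
    intro h0
    rw [h0, Matrix.rank_zero] at hrank
    omega
  have hker4 : 4 ≤ Module.finrank ℝ (LinearMap.ker Φ) := by
    have hrn := LinearMap.finrank_range_add_finrank_ker Φ
    have hd : Module.finrank ℝ (Fin 10 → ℝ) = 10 := by simp
    have hr : Module.finrank ℝ (LinearMap.range Φ) ≤ 6 := by
      have h := Submodule.finrank_le (LinearMap.range Φ)
      simpa using h
    omega
  set Bad := Submodule.comap Ψ (Submodule.span ℝ {A}) with hBadDef
  have hBad1 : Module.finrank ℝ Bad ≤ 1 := by
    have h1 : Module.finrank ℝ Bad = Module.finrank ℝ (Bad.map Ψ) :=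
      (Submodule.equivMapOfInjective Ψ hΨinj Bad).finrank_eq
    have h2 : Bad.map Ψ ≤ Submodule.span ℝ {A} := Submodule.map_comap_le _ _
    have h3 := Submodule.finrank_mono h2
    rw [finrank_span_singleton hAne] at h3
    omega
  have hnotle : ¬ (LinearMap.ker Φ ≤ Bad) := by
    intro hle
    have := Submodule.finrank_mono hle
    omega
  obtain ⟨c, hcK, hcB⟩ := SetLike.not_le_iff_exists.mp hnotle
  set S : Matrix (Fin 6) (Fin 6) ℝ := Y * sym4 c * Yᵀ with hSdef
  have hΨc : Ψ c = R * S * R := by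
    show W * sym4 c * Wᵀ = R * S * R
    rw [hWdef, hSdef, Matrix.transpose_mul, hRsym]
    simp only [Matrix.mul_assoc]
  have hSsym : Sᵀ = S := by
    rw [hSdef, Matrix.transpose_mul, Matrix.transpose_mul, Matrix.transpose_transpose,
      sym4_transpose]
    simp only [Matrix.mul_assoc]
  set F := ∑ i, ∑ j, |S i j| with hFdef
  have hF0 : 0 ≤ F := Finset.sum_nonneg fun i _ => Finset.sum_nonneg fun j _ => abs_nonneg _
  set ε : ℝ := 1 / (2 * (1 + F)) with hεdef
  have hε : 0 < ε := by rw [hεdef]; positivity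
  have hbound : ε * F ≤ 1/2 := by
    rw [hεdef]
    exact eps_mul_le F hF0
  set B := R * ((1/2 : ℝ) • (1 : Matrix (Fin 6) (Fin 6) ℝ) + ε • S) * R with hBdef
  set C := R * ((1/2 : ℝ) • (1 : Matrix (Fin 6) (Fin 6) ℝ) - ε • S) * R with hCdef
  have hBd : B = (1/2 : ℝ) • A + ε • (Ψ c) := by
    rw [hBdef, Matrix.mul_add, Matrix.add_mul, Matrix.mul_smul, Matrix.smul_mul,
      Matrix.mul_smul, Matrix.smul_mul, Matrix.mul_one, hRR, hΨc]
  have hCd : C = (1/2 : ℝ) • A - ε • (Ψ c) := by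
    rw [hCdef, Matrix.mul_sub, Matrix.sub_mul, Matrix.mul_smul, Matrix.smul_mul,
      Matrix.mul_smul, Matrix.smul_mul, Matrix.mul_one, hRR, hΨc]
  have hBpsd : B.PosSemidef := by
    have hb : |ε| * F ≤ 1/2 := by rwa [abs_of_pos hε]
    have hM := posSemidef_half_add S hSsym ε hb
    have h := hM.conjTranspose_mul_mul_same R
    rwa [hRH] at h
  have hCpsd : C.PosSemidef := by
    have hb : |(-ε)| * F ≤ 1/2 := by rwa [abs_neg, abs_of_pos hε]
    have hM := posSemidef_half_add S hSsym (-ε) hb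
    rw [neg_smul, ← sub_eq_add_neg] at hM
    have h := hM.conjTranspose_mul_mul_same R
    rwa [hRH] at h
  -- constraints satisfied by Ψ c
  have hcon : constr (Ψ c) = 0 := hcK
  have d14 : (Ψ c) 0 3 = (Ψ c) 1 1 :=
    sub_eq_zero.mp (congrFun hcon 0)
  have d15 : (Ψ c) 0 4 = (Ψ c) 1 2 :=
    sub_eq_zero.mp (congrFun hcon 1)
  have d16 : (Ψ c) 0 5 = (Ψ c) 2 2 :=
    sub_eq_zero.mp (congrFun hcon 2)
  have d25 : (Ψ c) 1 4 = (Ψ c) 2 3 :=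
    sub_eq_zero.mp (congrFun hcon 3)
  have d26 : (Ψ c) 1 5 = (Ψ c) 2 4 :=
    sub_eq_zero.mp (congrFun hcon 4)
  have d46 : (Ψ c) 3 5 = (Ψ c) 4 4 :=
    sub_eq_zero.mp (congrFun hcon 5)
  have hBmem : memC B := by
    refine ⟨hBpsd, ?_, ?_, ?_, ?_, ?_, ?_⟩ <;>
      rw [hBd] <;>
      simp only [Matrix.add_apply, Matrix.smul_apply, smul_eq_mul]
    · rw [h14, d14]
    · rw [h15, d15]
    · rw [h16, d16]
    · rw [h25, d25]
    · rw [h26, d26]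
    · rw [h46, d46]
  have hCmem : memC C := by
    refine ⟨hCpsd, ?_, ?_, ?_, ?_, ?_, ?_⟩ <;>
      rw [hCd] <;>
      simp only [Matrix.sub_apply, Matrix.smul_apply, smul_eq_mul]
    · rw [h14, d14]
    · rw [h15, d15]
    · rw [h16, d16]
    · rw [h25, d25]
    · rw [h26, d26]
    · rw [h46, d46]
  refine ⟨B, C, hBmem, hCmem, ?_, ?_⟩
  · rw [hBd, hCd]
    module
  · rintro ⟨s, _, hBs⟩
    apply hcB
    have h1 : (1/2 : ℝ) • A + ε • Ψ c = s • A := by rw [← hBd, hBs]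
    have h2 : ε • Ψ c = (s - 1/2) • A := by
      rw [sub_smul, ← h1]
      module
    have h3 : Ψ c = ((s - 1/2) / ε) • A := by
      calc Ψ c = ε⁻¹ • (ε • Ψ c) := by
            rw [smul_smul, inv_mul_cancel₀ hε.ne', one_smul]
        _ = ε⁻¹ • ((s - 1/2) • A) := by rw [h2]
        _ = ((s - 1/2) / ε) • A := by
            rw [smul_smul]
            congr 1
            field_simp
    rw [hBadDef]
    refine Submodule.mem_comap.mpr ?_
    rw [h3]
    exact Submodule.smul_mem _ _ (Submodule.mem_span_singleton_self A)
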